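/- Let M be a smooth finite-dimensional manifold and let (s_z)_{z∈M} be a family of smooth diffeomorphisms of M such that for all z ∈ M: s_z(z) = z, the differential of s_z at z equals −id on T_zM, s_z∘s_z = id_M, and s_y∘s_x∘s_y = s_{s_y(x)} for all x, y ∈ M. Define, for smooth vector fields X, Y and z ∈ M, (∇_X Y)_z := (1/2)[X, Y + (s_z)_*Y]_z. Then ∇ is invariant under every s_y: for all x, y ∈ M and all smooth vector fields X, Y, (∇_{(s_y)_*X} (s_y)_*Y)_x = d(s_y)_{s_y(x)}((∇_X Y)_{s_y(x)}). -/

import Mathlib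

open scoped Manifold
local notation "∞" => (⊤ : ℕ∞)

/-- The pushforward of a vector field (viewed, as is standard, as a derivation of the
algebra of smooth functions) along a diffeomorphism `s` with smooth inverse `sinv`:
`(s_*Y) f = (Y (f ∘ s)) ∘ s⁻¹`. -/
noncomputable def pushforwardVF
    {E : Type*} [NormedAddCommGroup E] [NormedSpace ℝ E]
    {H : Type*} [TopologicalSpace H] {I : ModelWithCorners ℝ E H}
    {M : Type*} [TopologicalSpace M] [ChartedSpace H M]
    (s sinv : C^∞⟮I, M; I, M⟯) (hs : ∀ z : M, s (sinv z) = z)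
    (Y : Derivation ℝ C^∞⟮I, M; ℝ⟯ C^∞⟮I, M; ℝ⟯) :
    Derivation ℝ C^∞⟮I, M; ℝ⟯ C^∞⟮I, M; ℝ⟯ :=
  Derivation.mk'
    { toFun := fun f => (Y (f.comp s)).comp sinv
      map_add' := fun f g => by
        show (Y ((f + g).comp s)).comp sinv
            = (Y (f.comp s)).comp sinv + (Y (g.comp s)).comp sinv
        rw [ContMDiffMap.add_comp, map_add, ContMDiffMap.add_comp]
      map_smul' := fun c f => by
        show (Y ((c • f).comp s)).comp sinv = c • (Y (f.comp s)).comp sinv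
        rw [ContMDiffMap.smul_comp, Derivation.map_smul, ContMDiffMap.smul_comp] }
    (fun f g => by
      show (Y ((f * g).comp s)).comp sinv
          = f • (Y (g.comp s)).comp sinv + g • (Y (f.comp s)).comp sinv
      rw [ContMDiffMap.mul_comp, Derivation.leibniz]
      ext z
      simp [hs z])

/-- (Remark 1.9.) Let `(s_z)_{z∈M}` be a family of smooth
diffeomorphisms of the smooth finite-dimensional manifold `M` with `s_z z = z`,
`d(s_z)_z = -id`, `s_z ∘ s_z = id` and `s_y ∘ s_x ∘ s_y = s_{s_y x}`. Define
`(∇_X Y)_z := (1/2)[X, Y + (s_z)_*Y]_z`. Then `∇` is invariant under every `s_y`: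
for all `x, y` and all smooth vector fields `X, Y`,
`(∇_{(s_y)_*X} (s_y)_*Y)_x = d(s_y)_{s_y x}((∇_X Y)_{s_y x})`. -/
theorem statement4
    {E : Type*} [NormedAddCommGroup E] [NormedSpace ℝ E] [FiniteDimensional ℝ E]
    {H : Type*} [TopologicalSpace H] {I : ModelWithCorners ℝ E H} [I.Boundaryless]
    {M : Type*} [TopologicalSpace M] [ChartedSpace H M] [IsManifold I (⊤ : ℕ∞) M]
    [T2Space M]
    (s : M → C^∞⟮I, M; I, M⟯)
    (hfix : ∀ z : M, s z z = z)
    (hinvol : ∀ z w : M, s z (s z w) = w)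
    (hsym : ∀ x y w : M, s y (s x (s y w)) = s (s y x) w)
    (hds : ∀ (z : M) (v : PointDerivation I z), 𝒅ₕ (hfix z) v = -v) :
    ∀ (x y : M) (X Y : Derivation ℝ C^∞⟮I, M; ℝ⟯ C^∞⟮I, M; ℝ⟯),
      (1/2 : ℝ) • Derivation.evalAt x
          ⁅pushforwardVF (s y) (s y) (hinvol y) X,
            pushforwardVF (s y) (s y) (hinvol y) Y
              + pushforwardVF (s x) (s x) (hinvol x)
                  (pushforwardVF (s y) (s y) (hinvol y) Y)⁆
        = 𝒅ₕ (hinvol y x)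
            ((1/2 : ℝ) • Derivation.evalAt (s y x)
              ⁅X, Y + pushforwardVF (s (s y x)) (s (s y x)) (hinvol (s y x)) Y⁆) := by
  intro x y X Y
  -- abbreviation for application of pushforwardVF
  have papp : ∀ (σ σinv : C^∞⟮I, M; I, M⟯) (hσ : ∀ z : M, σ (σinv z) = z)
      (Z : Derivation ℝ C^∞⟮I, M; ℝ⟯ C^∞⟮I, M; ℝ⟯) (f : C^∞⟮I, M; ℝ⟯),
      pushforwardVF σ σinv hσ Z f = (Z (f.comp σ)).comp σinv := fun _ _ _ _ _ => rfl
  -- double composition with an involution is the identity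
  have hdouble : ∀ (w : M) (g : C^∞⟮I, M; ℝ⟯), (g.comp (s w)).comp (s w) = g := by
    intro w g; ext z
    show g (s w (s w z)) = g z
    rw [hinvol w z]
  -- pushforward is additive
  have hadd : ∀ (σ σinv : C^∞⟮I, M; I, M⟯) (hσ : ∀ z : M, σ (σinv z) = z)
      (Z W : Derivation ℝ C^∞⟮I, M; ℝ⟯ C^∞⟮I, M; ℝ⟯),
      pushforwardVF σ σinv hσ (Z + W)
        = pushforwardVF σ σinv hσ Z + pushforwardVF σ σinv hσ W := by
    intro σ σinv hσ Z W
    refine Derivation.ext fun f => ?_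
    show ((Z + W) (f.comp σ)).comp σinv
        = (Z (f.comp σ)).comp σinv + (W (f.comp σ)).comp σinv
    rw [Derivation.add_apply, ContMDiffMap.add_comp]
  -- key composition identity coming from `hsym`
  have hcomp : ∀ (Z : Derivation ℝ C^∞⟮I, M; ℝ⟯ C^∞⟮I, M; ℝ⟯),
      pushforwardVF (s x) (s x) (hinvol x) (pushforwardVF (s y) (s y) (hinvol y) Z)
        = pushforwardVF (s y) (s y) (hinvol y)
            (pushforwardVF (s (s y x)) (s (s y x)) (hinvol (s y x)) Z) := by
    intro Z
    refine Derivation.ext fun f => ?_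
    show ((Z ((f.comp (s x)).comp (s y))).comp (s y)).comp (s x)
        = ((Z ((f.comp (s y)).comp (s (s y x)))).comp (s (s y x))).comp (s y)
    have hfun : (f.comp (s x)).comp (s y) = (f.comp (s y)).comp (s (s y x)) := by
      ext w
      show f (s x (s y w)) = f (s y (s (s y x) w))
      congr 1
      calc s x (s y w) = s y (s y (s x (s y w))) := (hinvol y _).symm
        _ = s y (s (s y x) w) := by rw [hsym x y w]
    rw [hfun]
    ext z
    show (Z _) (s y (s x z)) = (Z _) (s (s y x) (s y z))
    congr 1
    have h := hsym x y (s y z)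
    rwa [hinvol y z] at h
  -- pushforward commutes with the bracket
  have hbr : ∀ (Z W : Derivation ℝ C^∞⟮I, M; ℝ⟯ C^∞⟮I, M; ℝ⟯),
      ⁅pushforwardVF (s y) (s y) (hinvol y) Z, pushforwardVF (s y) (s y) (hinvol y) W⁆
        = pushforwardVF (s y) (s y) (hinvol y) ⁅Z, W⁆ := by
    intro Z W
    refine Derivation.ext fun f => ?_
    rw [Derivation.commutator_apply, papp, papp, papp, papp, papp,
      Derivation.commutator_apply, hdouble, hdouble]
    ext z
    simp
  -- evalAt of a pushforward
  have heval : ∀ (D : Derivation ℝ C^∞⟮I, M; ℝ⟯ C^∞⟮I, M; ℝ⟯),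
      Derivation.evalAt x (pushforwardVF (s y) (s y) (hinvol y) D)
        = 𝒅ₕ (hinvol y x) (Derivation.evalAt (s y x) D) := by
    intro D
    ext f
    rfl
  rw [hcomp, ← hadd, hbr, heval, ← map_smul]
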